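/- For every integer n ≥ 2, the integer n - 1 divides Σ_{k=1}^{n-1} L_k · F_{n-k}. -/
import Mathlib


def L : ℕ → ℕ
  | 0 => 2
  | 1 => 1
  | (n+2) => L (n+1) + L n

lemma Lfib : ∀ n, L (n+1) = Nat.fib n + Nat.fib (n+2) := by
  intro n
  induction n using Nat.twoStepInduction with
  | zero => decide
  | one => decide
  | more m ih1 ih2 =>
    have ih2' : L (m+2) = Nat.fib (m+1) + Nat.fib (m+3) := ih2
    have c : Nat.fib (m+4) = Nat.fib (m+2) + Nat.fib (m+3) := Nat.fib_add_two
    have c2 : Nat.fib (m+2) = Nat.fib m + Nat.fib (m+1) := Nat.fib_add_two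
    show L (m+2) + L (m+1) = Nat.fib (m+2) + Nat.fib (m+4)
    omega

lemma key : ∀ m, ∑ k ∈ Finset.Icc 1 (m+1), L k * Nat.fib (m+2-k)
    = (m+1) * Nat.fib (m+2) := by
  intro m
  induction m using Nat.twoStepInduction with
  | zero => decide
  | one => decide
  | more m ih1 ih2 =>
    have h3 : (1:ℕ) ≤ m + 3 := by omega
    have h2 : (1:ℕ) ≤ m + 2 := by omega
    rw [show m+2+1 = (m+2)+1 from rfl]
    rw [Finset.sum_Icc_succ_top (by omega : (1:ℕ) ≤ m+2+1),
        Finset.sum_Icc_succ_top (by omega : (1:ℕ) ≤ m+1+1)]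
    have hsplit : ∑ k ∈ Finset.Icc 1 (m+1), L k * Nat.fib (m+2+2-k)
        = (∑ k ∈ Finset.Icc 1 (m+1), L k * Nat.fib (m+3-k))
          + ∑ k ∈ Finset.Icc 1 (m+1), L k * Nat.fib (m+2-k) := by
      rw [← Finset.sum_add_distrib]
      apply Finset.sum_congr rfl
      intro k hk
      simp only [Finset.mem_Icc] at hk
      have : m+2+2-k = (m+2-k)+2 := by omega
      have h2 : m+3-k = (m+2-k)+1 := by omega
      rw [this, h2, Nat.fib_add_two]
      ring
    rw [hsplit]
    have ih1' : ∑ k ∈ Finset.Icc 1 (m+1), L k * Nat.fib (m+3-k) + L (m+2) * Nat.fib 1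
        = (m+2) * Nat.fib (m+3) := by
      have := ih2
      rw [Finset.sum_Icc_succ_top (by omega : (1:ℕ) ≤ m+1+1)] at this
      have e : ∀ k ∈ Finset.Icc 1 (m+1), L k * Nat.fib (m+1+2-k) = L k * Nat.fib (m+3-k) := by
        intro k hk; rfl
      rw [Finset.sum_congr rfl e] at this
      simpa using this
    have hL3 := Lfib (m+2)
    have hL2 := Lfib (m+1)
    have hfib4 : Nat.fib (m+4) = Nat.fib (m+2) + Nat.fib (m+3) := Nat.fib_add_two
    have hfib3 : Nat.fib (m+3) = Nat.fib (m+1) + Nat.fib (m+2) := Nat.fib_add_two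
    have E : (m+3) * Nat.fib (m+4)
        = (m+2)*Nat.fib (m+3) + (m+1)*Nat.fib (m+2) + Nat.fib (m+2) + Nat.fib (m+4) := by
      rw [hfib4]; ring
    have g1 : m+2+2-(m+1+1) = 2 := by omega
    have g2 : m+2+2-(m+2+1) = 1 := by omega
    rw [g1, g2]
    simp only [show m+1+1 = m+2 from rfl, show m+2+1 = m+3 from rfl,
      show m+1+2 = m+3 from rfl, show m+2+2 = m+4 from rfl,
      Nat.fib_one, Nat.fib_two, mul_one] at *
    omega

theorem stmt2 (n : ℕ) (hn : 2 ≤ n) :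
    (n - 1) ∣ ∑ k ∈ Finset.Icc 1 (n - 1), L k * Nat.fib (n - k) := by
  obtain ⟨m, rfl⟩ : ∃ m, n = m + 2 := ⟨n - 2, by omega⟩
  have : ∑ k ∈ Finset.Icc 1 (m+2-1), L k * Nat.fib (m+2-k)
      = (m+1) * Nat.fib (m+2) := by
    rw [show m+2-1 = m+1 from rfl]; exact key m
  rw [this, show m+2-1 = m+1 from rfl]
  exact Dvd.intro _ rfl
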